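/- The expected number of missing summands in the left fringe satisfies E[Y] = (2/p² − 1/p − 1) − (√(1 − p²))^N · C, where C = (2 − p)(1 − p²)/p² if N is even and C = (2 − p − p²)√(1 − p²)/p² if N is odd. -/

import Mathlib

open MeasureTheory Filter

/-- The Bernoulli(p) measure on `Bool`: `true` has probability `p`. -/
noncomputable def bern (p : ℝ) : Measure Bool :=
  ENNReal.ofReal p • Measure.dirac true + ENNReal.ofReal (1 - p) • Measure.dirac false

/-- The law of a random subset of `{0, …, N}` where each element is included
independently with probability `p`, encoded by indicator functions. -/
noncomputable def prodBern (p : ℝ) (N : ℕ) : Measure (Fin (N + 1) → Bool) :=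
  Measure.pi fun _ => bern p

/-- `n` belongs to the sumset `A + A`, where `A ⊆ {0,…,N}` is encoded by `ω`. -/
def inSumset {N : ℕ} (ω : Fin (N + 1) → Bool) (n : ℕ) : Prop :=
  ∃ a b : Fin (N + 1), ω a = true ∧ ω b = true ∧ (a : ℕ) + (b : ℕ) = n

/-- `Y`: the number of integers in `{0,…,N}` missing from `A + A`. -/
noncomputable def Ycount (N : ℕ) (ω : Fin (N + 1) → Bool) : ℕ :=
  {n : ℕ | n ≤ N ∧ ¬ inSumset ω n}.ncard

/-- `Z`: the number of integers in `{N+1,…,2N}` missing from `A + A`. -/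
noncomputable def Zcount (N : ℕ) (ω : Fin (N + 1) → Bool) : ℕ :=
  {n : ℕ | N + 1 ≤ n ∧ n ≤ 2 * N ∧ ¬ inSumset ω n}.ncard

/-- `W`: the number of integers in `{0,…,2N}` missing from `A + A`. -/
noncomputable def Wcount (N : ℕ) (ω : Fin (N + 1) → Bool) : ℕ :=
  {n : ℕ | n ≤ 2 * N ∧ ¬ inSumset ω n}.ncard

/-- `Ỹ`: the number of integers in `{0,…,⌊N/2⌋}` missing from `A + A`. -/
noncomputable def Ytilde (N : ℕ) (ω : Fin (N + 1) → Bool) : ℕ :=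
  {n : ℕ | n ≤ N / 2 ∧ ¬ inSumset ω n}.ncard

/-- `Z̃`: the number of integers in `{⌊3N/2⌋+1,…,2N}` missing from `A + A`. -/
noncomputable def Ztilde (N : ℕ) (ω : Fin (N + 1) → Bool) : ℕ :=
  {n : ℕ | 3 * N / 2 + 1 ≤ n ∧ n ≤ 2 * N ∧ ¬ inSumset ω n}.ncard

/-- A string of `k` bits has no two consecutive ones. -/
def noTwoOnes {k : ℕ} (x : Fin k → Bool) : Prop :=
  ∀ i : ℕ, ∀ hi : i + 1 < k, ¬(x ⟨i, Nat.lt_of_succ_lt hi⟩ = true ∧ x ⟨i + 1, hi⟩ = true)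

/-- `a_k`: the probability that `k` i.i.d. Bernoulli(p) bits contain no two
consecutive 1's (with `a_0 = 1`). -/
noncomputable def aseq (p : ℝ) (k : ℕ) : ℝ :=
  ((Measure.pi fun _ : Fin k => bern p) {x | noTwoOnes x}).toReal



instance mscPiBool {ι : Type*} [Countable ι] : MeasurableSingletonClass (ι → Bool) := by
  constructor
  intro x
  have h : ({x} : Set (ι → Bool)) = Set.pi Set.univ (fun i => {x i}) := by
    ext y; simp [Set.eq_singleton_iff_unique_mem, funext_iff, Set.mem_pi]
  rw [h]
  exact MeasurableSet.univ_pi fun i => measurableSet_singleton _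

lemma allMeas {ι : Type*} [Finite ι] (E : Set (ι → Bool)) : MeasurableSet E := by
  have : Countable ι := Countable.of_equiv _ (Equiv.refl ι)
  exact (Set.toFinite E).measurableSet

-- single and double coordinate events
lemma bern_true (p : ℝ) : bern p {true} = ENNReal.ofReal p := by
  simp [bern, Measure.dirac_apply]

lemma bern_false (p : ℝ) : bern p {false} = ENNReal.ofReal (1-p) := by
  simp [bern, Measure.dirac_apply]

lemma bern_univ (p : ℝ) (hp0 : 0 ≤ p) (hp1 : p ≤ 1) : bern p Set.univ = 1 := by
  have : bern p Set.univ = ENNReal.ofReal p + ENNReal.ofReal (1-p) := by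
    simp [bern, Measure.dirac_apply]
  rw [this, ← ENNReal.ofReal_add hp0 (by linarith), ← ENNReal.ofReal_one]
  norm_num

lemma bern_prob (p : ℝ) (hp0 : 0 ≤ p) (hp1 : p ≤ 1) : IsProbabilityMeasure (bern p) :=
  ⟨bern_univ p hp0 hp1⟩

lemma measure_single {k : ℕ} (p : ℝ) (hp0 : 0 ≤ p) (hp1 : p ≤ 1) (i : Fin k) (t : Set Bool) :
    (Measure.pi fun _ : Fin k => bern p) {x | x i ∈ t} = bern p t := by
  have h : {x : Fin k → Bool | x i ∈ t} = Set.pi Set.univ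
      (fun j => if j = i then t else Set.univ) := by
    ext y
    simp only [Set.mem_setOf_eq, Set.mem_pi, Set.mem_univ, true_implies]
    constructor
    · intro hy j; by_cases hj : j = i <;> simp [hj, hy]
    · intro hy; have := hy i; simpa using this
  haveI := bern_prob p hp0 hp1
  rw [h, Measure.pi_pi]
  rw [Finset.prod_eq_single i (fun j _ hj => by rw [if_neg hj]; exact bern_univ p hp0 hp1)
    (by simp)]
  simp

lemma measure_double {k : ℕ} (p : ℝ) (hp0 : 0 ≤ p) (hp1 : p ≤ 1) (i j : Fin k) (hij : i ≠ j) :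
    (Measure.pi fun _ : Fin k => bern p) {x | x i = true ∧ x j = true}
      = ENNReal.ofReal p * ENNReal.ofReal p := by
  have h : {x : Fin k → Bool | x i = true ∧ x j = true} = Set.pi Set.univ
      (fun l => if l = i ∨ l = j then {true} else Set.univ) := by
    ext y
    simp only [Set.mem_setOf_eq, Set.mem_pi, Set.mem_univ, true_implies]
    constructor
    · intro hy l
      rcases hy with ⟨h1, h2⟩
      by_cases hl : l = i ∨ l = j
      · rcases hl with rfl | rfl <;> simp [h1, h2]
      · simp [hl]
    · intro hy
      constructor
      · have := hy i; simpa using this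
      · have := hy j; simpa using this
  haveI := bern_prob p hp0 hp1
  rw [h, Measure.pi_pi]
  rw [← Finset.prod_subset (Finset.subset_univ ({i, j} : Finset (Fin k)))
    (fun l _ hl => by
      simp only [Finset.mem_insert, Finset.mem_singleton] at hl
      push_neg at hl
      rw [if_neg (by tauto)]; exact bern_univ p hp0 hp1)]
  rw [Finset.prod_pair hij]
  simp [bern_true]

lemma pi_indep {k : ℕ} (p : ℝ) (hp0 : 0 ≤ p) (hp1 : p ≤ 1) (S : Set (Fin k))
    (P Q : (Fin k → Bool) → Prop)
    (hP : ∀ x y : Fin k → Bool, (∀ i, i ∉ S → x i = y i) → P x → P y)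
    (hQ : ∀ x y : Fin k → Bool, (∀ i, i ∈ S → x i = y i) → Q x → Q y) :
    (Measure.pi fun _ : Fin k => bern p) {x | P x ∧ Q x} =
      (Measure.pi fun _ : Fin k => bern p) {x | P x} *
      (Measure.pi fun _ : Fin k => bern p) {x | Q x} := by
  classical
  haveI := bern_prob p hp0 hp1
  set pr : Fin k → Prop := fun i => i ∈ S with hpr
  let e := MeasurableEquiv.piEquivPiSubtypeProd (fun _ : Fin k => Bool) pr
  have hmp := MeasureTheory.measurePreserving_piEquivPiSubtypeProd
    (fun _ : Fin k => bern p) pr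
  let extS : ({i // pr i} → Bool) → (Fin k → Bool) :=
    fun u i => if h : pr i then u ⟨i, h⟩ else false
  let extC : ({i // ¬ pr i} → Bool) → (Fin k → Bool) :=
    fun v i => if h : pr i then false else v ⟨i, h⟩
  set A : Set ({i // pr i} → Bool) := {u | Q (extS u)} with hA
  set B : Set ({i // ¬ pr i} → Bool) := {v | P (extC v)} with hB
  have heQ : ∀ x : Fin k → Bool, Q x ↔ (fun i : {i // pr i} => x i) ∈ A := by
    intro x
    have hagree : ∀ i, i ∈ S → x i = extS (fun i : {i // pr i} => x i) i := by
      intro i hi; simp only [extS]; rw [dif_pos hi]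
    constructor
    · intro h
      exact hQ x _ hagree h
    · intro h
      exact hQ _ x (fun i hi => (hagree i hi).symm) h
  have heP : ∀ x : Fin k → Bool, P x ↔ (fun i : {i // ¬ pr i} => x i) ∈ B := by
    intro x
    have hagree : ∀ i, i ∉ S → x i = extC (fun i : {i // ¬ pr i} => x i) i := by
      intro i hi; simp only [extC]; rw [dif_neg hi]
    constructor
    · intro h
      exact hP x _ hagree h
    · intro h
      exact hP _ x (fun i hi => (hagree i hi).symm) h
  have hex : ∀ x : Fin k → Bool,
      e x = (fun i : {i // pr i} => x i, fun i : {i // ¬ pr i} => x i) := by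
    intro x; rfl
  have h1 : {x : Fin k → Bool | P x ∧ Q x} = e ⁻¹' (A ×ˢ B) := by
    ext x
    simp only [Set.mem_setOf_eq, Set.mem_preimage, hex, Set.mem_prod]
    rw [← heQ x, ← heP x]; tauto
  have h2 : {x : Fin k → Bool | P x} = e ⁻¹' (Set.univ ×ˢ B) := by
    ext x
    simp only [Set.mem_setOf_eq, Set.mem_preimage, hex, Set.mem_prod, Set.mem_univ, true_and]
    exact heP x
  have h3 : {x : Fin k → Bool | Q x} = e ⁻¹' (A ×ˢ Set.univ) := by
    ext x
    simp only [Set.mem_setOf_eq, Set.mem_preimage, hex, Set.mem_prod, Set.mem_univ, and_true]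
    exact heQ x
  rw [h1, h2, h3, hmp.measure_preimage ((allMeas _).prod (allMeas _)).nullMeasurableSet,
    hmp.measure_preimage (MeasurableSet.univ.prod (allMeas _)).nullMeasurableSet,
    hmp.measure_preimage ((allMeas _).prod MeasurableSet.univ).nullMeasurableSet]
  rw [Measure.prod_prod, Measure.prod_prod, Measure.prod_prod]
  simp [mul_comm]

def Pseg (N l r : ℕ) (x : Fin (N+1) → Bool) : Prop :=
  ∀ a b : Fin (N+1), (a : ℕ) + (b : ℕ) = l + r → l ≤ (a : ℕ) → l ≤ (b : ℕ) →
    ¬(x a = true ∧ x b = true)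

noncomputable def Gseq (p : ℝ) : ℕ → ℝ
  | 0 => 1 - p
  | 1 => 1 - p^2
  | (k+2) => (1 - p^2) * Gseq p k

lemma Gseq_nonneg (p : ℝ) (hp0 : 0 ≤ p) (hp1 : p ≤ 1) : ∀ k, 0 ≤ Gseq p k := by
  have h2 : 0 ≤ 1 - p^2 := by nlinarith
  intro k
  induction k using Nat.strong_induction_on with
  | _ k ih =>
    match k with
    | 0 => simpa [Gseq] using by linarith
    | 1 => simpa [Gseq] using h2
    | (m+2) => exact mul_nonneg h2 (ih m (by omega))

lemma compl_double {k : ℕ} (p : ℝ) (hp0 : 0 ≤ p) (hp1 : p ≤ 1) (i j : Fin k)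
    (hij : i ≠ j) :
    (Measure.pi fun _ : Fin k => bern p) {x | ¬(x i = true ∧ x j = true)}
      = ENNReal.ofReal (1 - p^2) := by
  haveI := bern_prob p hp0 hp1
  have h : {x : Fin k → Bool | ¬(x i = true ∧ x j = true)}
      = {x : Fin k → Bool | x i = true ∧ x j = true}ᶜ := rfl
  rw [h, measure_compl (allMeas _) (measure_ne_top _ _),
    measure_double p hp0 hp1 i j hij]
  rw [← ENNReal.ofReal_mul hp0, measure_univ, ← ENNReal.ofReal_one,
    ← ENNReal.ofReal_sub _ (by nlinarith)]
  ring_nf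

lemma seg_measure (p : ℝ) (hp0 : 0 ≤ p) (hp1 : p ≤ 1) (N : ℕ) :
    ∀ k l : ℕ, l + k ≤ N →
      (Measure.pi fun _ : Fin (N+1) => bern p) {x | Pseg N l (l+k) x}
        = ENNReal.ofReal (Gseq p k) := by
  haveI := bern_prob p hp0 hp1
  intro k
  induction k using Nat.strong_induction_on with
  | _ k ih =>
    match k with
    | 0 =>
      intro l hl
      have hset : {x : Fin (N+1) → Bool | Pseg N l (l+0) x}
          = {x : Fin (N+1) → Bool | x ⟨l, by omega⟩ ∈ ({false} : Set Bool)} := by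
        ext x
        simp only [Set.mem_setOf_eq, Pseg, Set.mem_singleton_iff]
        constructor
        · intro h
          have := h ⟨l, by omega⟩ ⟨l, by omega⟩ (by simp) (by simp) (by simp)
          rcases Bool.eq_false_or_eq_true (x ⟨l, by omega⟩) with h' | h'
          · exact absurd ⟨h', h'⟩ this
          · exact h'
        · intro h a b hab ha hb hx
          have h1 := hx.1
          have e1 : a = (⟨l, by omega⟩ : Fin (N+1)) := by
            apply Fin.ext; simp; omega
          rw [e1, h] at h1
          simp at h1
      rw [hset, measure_single p hp0 hp1, bern_false]
      simp [Gseq]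
    | 1 =>
      intro l hl
      have hset : {x : Fin (N+1) → Bool | Pseg N l (l+1) x}
          = {x : Fin (N+1) → Bool |
              ¬(x ⟨l, by omega⟩ = true ∧ x ⟨l+1, by omega⟩ = true)} := by
        ext x
        simp only [Set.mem_setOf_eq, Pseg]
        constructor
        · intro h
          exact h ⟨l, by omega⟩ ⟨l+1, by omega⟩ (by simp) (by simp) (by simp)
        · intro h a b hab ha hb hx
          have hxa := hx.1
          have hxb := hx.2
          have : ((a : ℕ) = l ∧ (b : ℕ) = l + 1) ∨ ((a : ℕ) = l + 1 ∧ (b : ℕ) = l) := by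
            omega
          rcases this with ⟨h1, h2⟩ | ⟨h1, h2⟩
          · have e1 : a = (⟨l, by omega⟩ : Fin (N+1)) := by apply Fin.ext; simp; omega
            have e2 : b = (⟨l+1, by omega⟩ : Fin (N+1)) := by apply Fin.ext; simp; omega
            rw [e1] at hxa; rw [e2] at hxb
            exact h ⟨hxa, hxb⟩
          · have e1 : a = (⟨l+1, by omega⟩ : Fin (N+1)) := by apply Fin.ext; simp; omega
            have e2 : b = (⟨l, by omega⟩ : Fin (N+1)) := by apply Fin.ext; simp; omega
            rw [e1] at hxa; rw [e2] at hxb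
            exact h ⟨hxb, hxa⟩
      rw [hset, compl_double p hp0 hp1 _ _ (by simp [Fin.ext_iff]),
        show Gseq p 1 = 1 - p^2 from rfl]
    | (m+2) =>
      intro l hl
      set il : Fin (N+1) := ⟨l, by omega⟩
      set ir : Fin (N+1) := ⟨l+m+2, by omega⟩
      set S : Set (Fin (N+1)) := {i | l + 1 ≤ (i : ℕ) ∧ (i : ℕ) ≤ l + m + 1} with hS
      set P : (Fin (N+1) → Bool) → Prop := fun x => ¬(x il = true ∧ x ir = true) with hP
      set Q : (Fin (N+1) → Bool) → Prop := fun x => Pseg N (l+1) (l+1+m) x with hQ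
      have hvl : (il : ℕ) = l := rfl
      have hvr : (ir : ℕ) = l + m + 2 := rfl
      have hsplit : {x : Fin (N+1) → Bool | Pseg N l (l+(m+2)) x} = {x | P x ∧ Q x} := by
        ext x
        simp only [Set.mem_setOf_eq, Pseg, hP, hQ]
        constructor
        · intro h
          refine ⟨h il ir (by rw [hvl, hvr]; omega) (by rw [hvl]) (by rw [hvr]; omega), ?_⟩
          intro a b hab ha hb
          exact h a b (by omega) (by omega) (by omega)
        · rintro ⟨h1, h2⟩ a b hab ha hb
          by_cases hcase : (a : ℕ) = l ∨ (b : ℕ) = l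
          · rcases hcase with hc | hc
            · have hb' : (b : ℕ) = l + m + 2 := by omega
              have e1 : a = il := by apply Fin.ext; rw [hvl]; omega
              have e2 : b = ir := by apply Fin.ext; rw [hvr]; omega
              rw [e1, e2]; exact h1
            · have ha' : (a : ℕ) = l + m + 2 := by omega
              have e1 : b = il := by apply Fin.ext; rw [hvl]; omega
              have e2 : a = ir := by apply Fin.ext; rw [hvr]; omega
              rw [e1, e2]; intro hx; exact h1 ⟨hx.2, hx.1⟩
          · push_neg at hcase
            exact h2 a b (by omega) (by omega) (by omega)
      have hPdep : ∀ x y : Fin (N+1) → Bool, (∀ i, i ∉ S → x i = y i) → P x → P y := by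
        intro x y hagree hx hy
        have hil : il ∉ S := by simp only [hS, Set.mem_setOf_eq, hvl]; omega
        have hir : ir ∉ S := by simp only [hS, Set.mem_setOf_eq, hvr]; omega
        exact hx ⟨(hagree il hil).trans hy.1, (hagree ir hir).trans hy.2⟩
      have hQdep : ∀ x y : Fin (N+1) → Bool, (∀ i, i ∈ S → x i = y i) → Q x → Q y := by
        intro x y hagree hx a b hab ha hb hy
        have haS : a ∈ S := by simp [hS]; omega
        have hbS : b ∈ S := by simp [hS]; omega
        exact hx a b hab ha hb ⟨(hagree a haS).trans hy.1, (hagree b hbS).trans hy.2⟩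
      rw [hsplit, pi_indep p hp0 hp1 S P Q hPdep hQdep]
      have hQm : (Measure.pi fun _ : Fin (N+1) => bern p) {x | Q x}
          = ENNReal.ofReal (Gseq p m) := by
        have := ih m (by omega) (l+1) (by omega)
        exact this
      have hPm : (Measure.pi fun _ : Fin (N+1) => bern p) {x | P x}
          = ENNReal.ofReal (1 - p^2) := by
        exact compl_double p hp0 hp1 il ir (by simp only [ne_eq, Fin.ext_iff, hvl, hvr]; omega)
      rw [hPm, hQm, ← ENNReal.ofReal_mul (by nlinarith)]
      rfl




lemma notinSumset_iff {N : ℕ} (ω : Fin (N+1) → Bool) (n : ℕ) :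
    ¬ inSumset ω n ↔ Pseg N 0 n ω := by
  simp only [inSumset, Pseg, not_exists, Nat.zero_add, Nat.zero_le, forall_const]
  constructor
  · intro h a b hab hx
    exact (h a b) ⟨hx.1, hx.2, hab⟩
  · rintro h a b ⟨h1, h2, h3⟩
    exact h a b h3 ⟨h1, h2⟩

lemma measure_notinSumset (p : ℝ) (hp0 : 0 ≤ p) (hp1 : p ≤ 1) (N n : ℕ) (hn : n ≤ N) :
    (prodBern p N) {ω | ¬ inSumset ω n} = ENNReal.ofReal (Gseq p n) := by
  have h : {ω : Fin (N+1) → Bool | ¬ inSumset ω n} = {ω | Pseg N 0 n ω} := by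
    ext ω; exact notinSumset_iff ω n
  rw [prodBern, h]
  have := seg_measure p hp0 hp1 N n 0 (by omega)
  simpa using this

lemma Ycount_eq (N : ℕ) (ω : Fin (N+1) → Bool) :
    (Ycount N ω : ℝ) = ∑ n ∈ Finset.range (N+1),
      Set.indicator {ω' : Fin (N+1) → Bool | ¬ inSumset ω' n} (fun _ => (1:ℝ)) ω := by
  classical
  have h : {n : ℕ | n ≤ N ∧ ¬ inSumset ω n}
      = ↑((Finset.range (N+1)).filter (fun n => ¬ inSumset ω n)) := by
    ext n; simp [Nat.lt_succ_iff, and_comm]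
  rw [Ycount, h, Set.ncard_coe_finset, Finset.card_filter]
  push_cast
  refine Finset.sum_congr rfl fun n _ => ?_
  by_cases hn : inSumset ω n <;> simp [Set.indicator_apply, hn]

lemma integral_Ycount (p : ℝ) (hp0 : 0 ≤ p) (hp1 : p ≤ 1) (N : ℕ) :
    (∫ ω, (Ycount N ω : ℝ) ∂ prodBern p N) = ∑ n ∈ Finset.range (N+1), Gseq p n := by
  haveI : IsProbabilityMeasure (prodBern p N) := by
    rw [prodBern]
    haveI := bern_prob p hp0 hp1
    infer_instance
  rw [integral_congr_ae (Filter.Eventually.of_forall (Ycount_eq N))]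
  rw [integral_finset_sum _ (fun n _ => (integrable_const (1:ℝ)).indicator (allMeas _))]
  refine Finset.sum_congr rfl fun n hn => ?_
  rw [integral_indicator_const (1:ℝ) (allMeas _), measureReal_def,
    measure_notinSumset p hp0 hp1 N n (by simp at hn; omega)]
  rw [ENNReal.toReal_ofReal (Gseq_nonneg p hp0 hp1 n)]
  simp

lemma Gseq_closed (p : ℝ) (hp1 : p ≤ 1) (hp0 : 0 ≤ p) : ∀ n : ℕ,
    Gseq p n = if Even n then (1-p) * Real.sqrt (1-p^2) ^ n
      else Real.sqrt (1-p^2) ^ (n+1) := by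
  have h2 : (0:ℝ) ≤ 1 - p^2 := by nlinarith
  have hs2 : Real.sqrt (1-p^2) ^ 2 = 1 - p^2 := Real.sq_sqrt h2
  intro n
  induction n using Nat.strong_induction_on with
  | _ n ih =>
    match n with
    | 0 => simp [Gseq]
    | 1 => simp [Gseq, hs2]
    | (m+2) =>
      have : Gseq p (m+2) = (1-p^2) * Gseq p m := rfl
      rw [this, ih m (by omega)]
      have hpow : ∀ j : ℕ, Real.sqrt (1-p^2) ^ (j+2)
          = (1-p^2) * Real.sqrt (1-p^2) ^ j := by
        intro j; rw [pow_add, hs2]; ring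
      have hpar : Even (m+2) ↔ Even m := by simp [parity_simps]
      by_cases hm : Even m
      · rw [if_pos hm, if_pos (hpar.mpr hm), hpow m]; ring
      · rw [if_neg hm, if_neg (fun hc => hm (hpar.mp hc))]
        have : m + 2 + 1 = m + 1 + 2 := by omega
        rw [this, hpow (m+1)]

lemma gsum (p : ℝ) (hp0 : 0 < p) (hp1 : p < 1) (N : ℕ) :
    ∑ n ∈ Finset.range (N+1), Gseq p n =
      (2 / p ^ 2 - 1 / p - 1) -
        Real.sqrt (1 - p ^ 2) ^ N *
          (if Even N then (2 - p) * (1 - p ^ 2) / p ^ 2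
           else (2 - p - p ^ 2) * Real.sqrt (1 - p ^ 2) / p ^ 2) := by
  have hp0' : (0:ℝ) ≤ p := le_of_lt hp0
  have hp1' : p ≤ 1 := le_of_lt hp1
  have h2 : (0:ℝ) ≤ 1 - p^2 := by nlinarith
  have hs2 : Real.sqrt (1-p^2) ^ 2 = 1 - p^2 := Real.sq_sqrt h2
  have hp2 : p^2 ≠ 0 := by positivity
  set s := Real.sqrt (1-p^2) with hs
  induction N with
  | zero =>
    simp only [Nat.zero_add, Finset.range_one, Finset.sum_singleton, pow_zero, one_mul]
    rw [Gseq_closed p hp1' hp0' 0, if_pos (by decide : Even 0), if_pos (by decide : Even 0)]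
    simp only [pow_zero, mul_one]
    field_simp
    ring
  | succ N ihN =>
    rw [Finset.sum_range_succ, ihN, Gseq_closed p hp1' hp0' (N+1)]
    have hpar : Even (N+1) ↔ ¬ Even N := Nat.even_add_one
    rcases Nat.even_or_odd N with hN | hN
    · rw [if_pos hN, if_neg (by simp [hpar, hN]), if_neg (by rw [Nat.even_add_one]; simpa using hN)]
      have e1 : s ^ (N+1+1) = s^N * (1-p^2) := by rw [show N+1+1 = N+2 by rfl, pow_add, hs2]
      have e2 : s ^ (N+1) * ((2 - p - p^2) * s / p^2) = s^N * (1-p^2) * (2-p-p^2) / p^2 := by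
        rw [show s^(N+1) * ((2 - p - p^2) * s / p^2) = s^N * (s*s) * (2-p-p^2)/p^2 by ring,
          show s*s = s^2 by ring, hs2]
      rw [e1, e2]
      field_simp
      ring
    · have hN' : ¬ Even N := Nat.not_even_iff_odd.mpr hN
      rw [if_neg hN', if_pos (hpar.mpr hN'), if_pos (hpar.mpr hN')]
      have e1 : s ^ (N+1) = s^N * s := by rw [pow_succ]
      rw [e1]
      field_simp
      ring

/-- The expected number of missing summands in the left fringe. -/
theorem stmt1 (p : ℝ) (hp0 : 0 < p) (hp1 : p < 1) (N : ℕ) :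
    (∫ ω, (Ycount N ω : ℝ) ∂ prodBern p N) =
      (2 / p ^ 2 - 1 / p - 1) -
        Real.sqrt (1 - p ^ 2) ^ N *
          (if Even N then (2 - p) * (1 - p ^ 2) / p ^ 2
           else (2 - p - p ^ 2) * Real.sqrt (1 - p ^ 2) / p ^ 2) := by
  rw [integral_Ycount p hp0.le hp1.le N]
  exact gsum p hp0 hp1 N
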